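/- Let n be a positive integer and let α, γ be complex numbers. Define φ₂(A, B) = α(AB − BA) + γ((tr B)·A − (tr A)·B) on n×n complex matrices, define φ₃(A₁, A₂, A₃) = φ₂(φ₂(A₂, A₃), A₁) − φ₂(φ₂(A₁, A₃), A₂) + φ₂(φ₂(A₁, A₂), A₃), and define φ₄(A₁, A₂, A₃, A₄) = φ₂(φ₃(A₂, A₃, A₄), A₁) − φ₂(φ₃(A₁, A₃, A₄), A₂) + φ₂(φ₃(A₁, A₂, A₄), A₃) − φ₂(φ₃(A₁, A₂, A₃), A₄). Then φ₄(A₁, A₂, A₃, A₄) = 0 for all n×n complex matrices A₁, A₂, A₃, A₄. -/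
import Mathlib


open Matrix

/-- The deformed commutator `φ₂(A, B) = α(AB − BA) + γ((tr B)·A − (tr A)·B)`. -/
noncomputable def phi2 {n : ℕ} (α γ : ℂ) (A B : Matrix (Fin n) (Fin n) ℂ) :
    Matrix (Fin n) (Fin n) ℂ :=
  α • (A * B - B * A) + γ • (B.trace • A - A.trace • B)

/-- `φ₃(A₁, A₂, A₃) = φ₂(φ₂(A₂,A₃),A₁) − φ₂(φ₂(A₁,A₃),A₂) + φ₂(φ₂(A₁,A₂),A₃)`. -/
noncomputable def phi3 {n : ℕ} (α γ : ℂ) (A₁ A₂ A₃ : Matrix (Fin n) (Fin n) ℂ) :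
    Matrix (Fin n) (Fin n) ℂ :=
  phi2 α γ (phi2 α γ A₂ A₃) A₁ - phi2 α γ (phi2 α γ A₁ A₃) A₂ +
    phi2 α γ (phi2 α γ A₁ A₂) A₃

/-- `φ₄(A₁,A₂,A₃,A₄) = Σᵢ (−1)^{i−1} φ₂(φ₃(complement of Aᵢ), Aᵢ)`. -/
noncomputable def phi4 {n : ℕ} (α γ : ℂ) (A₁ A₂ A₃ A₄ : Matrix (Fin n) (Fin n) ℂ) :
    Matrix (Fin n) (Fin n) ℂ :=
  phi2 α γ (phi3 α γ A₂ A₃ A₄) A₁ - phi2 α γ (phi3 α γ A₁ A₃ A₄) A₂ +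
    phi2 α γ (phi3 α γ A₁ A₂ A₄) A₃ - phi2 α γ (phi3 α γ A₁ A₂ A₃) A₄

lemma trace_phi2 {n : ℕ} (α γ : ℂ) (A B : Matrix (Fin n) (Fin n) ℂ) :
    (phi2 α γ A B).trace = 0 := by
  simp only [phi2, trace_add, trace_smul, trace_sub, smul_eq_mul]
  rw [trace_mul_comm]
  ring

lemma phi2_left {n : ℕ} (α γ : ℂ) (X A : Matrix (Fin n) (Fin n) ℂ) (h : X.trace = 0) :
    phi2 α γ X A = α • (X * A - A * X) + (γ * A.trace) • X := by
  simp [phi2, h, smul_smul]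

lemma phi3_eq {n : ℕ} (α γ : ℂ) (A₁ A₂ A₃ : Matrix (Fin n) (Fin n) ℂ) :
    phi3 α γ A₁ A₂ A₃ = (-(α * γ)) •
      (A₁.trace • (A₂ * A₃ - A₃ * A₂) - A₂.trace • (A₁ * A₃ - A₃ * A₁) +
        A₃.trace • (A₁ * A₂ - A₂ * A₁)) := by
  rw [phi3, phi2_left _ _ _ _ (trace_phi2 _ _ _ _), phi2_left _ _ _ _ (trace_phi2 _ _ _ _),
    phi2_left _ _ _ _ (trace_phi2 _ _ _ _)]
  simp only [phi2]
  simp only [mul_add, add_mul, mul_sub, sub_mul, smul_add, smul_sub, sub_smul, add_smul,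
    smul_smul, smul_mul_assoc, mul_smul_comm, mul_assoc]
  module

lemma trace_phi3 {n : ℕ} (α γ : ℂ) (A₁ A₂ A₃ : Matrix (Fin n) (Fin n) ℂ) :
    (phi3 α γ A₁ A₂ A₃).trace = 0 := by
  simp only [phi3, trace_add, trace_sub, trace_phi2, sub_zero, add_zero, sub_self]

theorem stmt_1 (n : ℕ) (hn : 0 < n) (α γ : ℂ)
    (A₁ A₂ A₃ A₄ : Matrix (Fin n) (Fin n) ℂ) :
    phi4 α γ A₁ A₂ A₃ A₄ = 0 := by
  rw [phi4, phi2_left _ _ _ _ (trace_phi3 _ _ _ _ _), phi2_left _ _ _ _ (trace_phi3 _ _ _ _ _),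
    phi2_left _ _ _ _ (trace_phi3 _ _ _ _ _), phi2_left _ _ _ _ (trace_phi3 _ _ _ _ _)]
  simp only [phi3_eq]
  simp only [mul_add, add_mul, mul_sub, sub_mul, smul_add, smul_sub, sub_smul, add_smul,
    smul_smul, smul_mul_assoc, mul_smul_comm, mul_assoc]
  module
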